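/- Fix α ∈ (0,1). Let (e_i)_{i≥1} be a stationary and ergodic sequence of real-valued random variables whose common distribution function F has a density bounded by a finite constant on an open neighborhood of s := inf{t ∈ ℝ : F(t) ≥ 1 − α} and is strictly increasing at s. For each n, let ê_{1,n}, …, ê_{n,n} be random variables satisfying max_{1 ≤ i ≤ n} |ê_{i,n} − e_i| → 0 in probability as n → ∞. Then the ⌈(1−α) n⌉-th smallest value among ê_{1,n}, …, ê_{n,n} converges in probability to s. -/

import Mathlib

open MeasureTheory Filter Set

/-- The shift map on paths. -/
def pathShift {E : Type*} : (ℕ → E) → (ℕ → E) := fun f i => f (i + 1)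

/-- A process is stationary and ergodic if the shift map is an ergodic
measure-preserving transformation of its path law. -/
def StationaryErgodic {Ω E : Type*} [MeasurableSpace Ω] [MeasurableSpace E]
    (μ : Measure Ω) (V : ℕ → Ω → E) : Prop :=
  Ergodic pathShift (Measure.map (fun ω (i : ℕ) => V i ω) μ)

/-- The `k`-th smallest value among `v 0, …, v (n-1)`. -/
noncomputable def kthSmallest (n k : ℕ) (v : ℕ → ℝ) : ℝ :=
  sInf {t : ℝ | k ≤ Nat.card {i : ℕ // i < n ∧ v i ≤ t}}

open scoped ENNReal

private lemma natCard_eq_filterCard (n : ℕ) (t : ℝ) (v : ℕ → ℝ) :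
    Nat.card {i : ℕ // i < n ∧ v i ≤ t} = ((Finset.range n).filter fun i => v i ≤ t).card := by
  rw [← Nat.card_eq_finsetCard]
  exact Nat.card_congr (Equiv.subtypeEquivRight (by simp))

private lemma kthSmallest_eq (n k : ℕ) (v : ℕ → ℝ) :
    kthSmallest n k v
      = sInf {t : ℝ | k ≤ ((Finset.range n).filter fun i => v i ≤ t).card} := by
  unfold kthSmallest
  congr 1
  ext t
  simp [natCard_eq_filterCard]

private lemma cnt_le_cnt {n : ℕ} {t t' : ℝ} {v w : ℕ → ℝ}
    (h : ∀ i < n, v i ≤ t → w i ≤ t') :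
    ((Finset.range n).filter fun i => v i ≤ t).card
      ≤ ((Finset.range n).filter fun i => w i ≤ t').card := by
  apply Finset.card_le_card
  intro i hi
  simp only [Finset.mem_filter, Finset.mem_range] at *
  exact ⟨hi.1, h i hi.1 hi.2⟩

private lemma kthSmallest_le_iff {n k : ℕ} (hn : 0 < n) (hk1 : 0 < k) (hkn : k ≤ n)
    (v : ℕ → ℝ) (t : ℝ) :
    kthSmallest n k v ≤ t ↔ k ≤ ((Finset.range n).filter fun i => v i ≤ t).card := by
  rw [kthSmallest_eq]
  set S : Set ℝ := {u : ℝ | k ≤ ((Finset.range n).filter fun i => v i ≤ u).card} with hS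
  have hrange : (Finset.range n).Nonempty := ⟨0, Finset.mem_range.mpr hn⟩
  have himg : ((Finset.range n).image v).Nonempty := hrange.image v
  have hSne : S.Nonempty := by
    refine ⟨((Finset.range n).image v).max' himg, ?_⟩
    have hfil : (Finset.range n).filter
        (fun i => v i ≤ ((Finset.range n).image v).max' himg) = Finset.range n := by
      apply Finset.filter_true_of_mem
      intro i hi
      exact Finset.le_max' _ _ (Finset.mem_image_of_mem v hi)
    show k ≤ _
    rw [hfil, Finset.card_range]
    exact hkn
  have hSbdd : BddBelow S := by
    refine ⟨((Finset.range n).image v).min' himg, fun u hu => ?_⟩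
    have hpos : 0 < ((Finset.range n).filter fun i => v i ≤ u).card := lt_of_lt_of_le hk1 hu
    obtain ⟨i, hi⟩ := Finset.card_pos.mp hpos
    simp only [Finset.mem_filter, Finset.mem_range] at hi
    exact le_trans (Finset.min'_le _ _
      (Finset.mem_image_of_mem v (Finset.mem_range.mpr hi.1))) hi.2
  have hInf : sInf S ∈ S := by
    by_contra hni
    have hA : ((Finset.range n).filter fun i => sInf S < v i).Nonempty := by
      rw [Finset.filter_nonempty_iff]
      by_contra hA
      push_neg at hA
      apply hni
      have hfil : (Finset.range n).filter (fun i => v i ≤ sInf S) = Finset.range n :=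
        Finset.filter_true_of_mem fun i hi => hA i hi
      show k ≤ _
      rw [hfil, Finset.card_range]
      exact hkn
    set A := (Finset.range n).filter fun i => sInf S < v i with hAdef
    have hAimg : (A.image v).Nonempty := hA.image v
    set c := (A.image v).min' hAimg with hcdef
    have hcS : sInf S < c := by
      obtain ⟨i, hiA, hvi⟩ := Finset.mem_image.mp ((A.image v).min'_mem hAimg)
      rw [hcdef, ← hvi]
      exact (Finset.mem_filter.mp hiA).2
    have hlb : ∀ u ∈ S, c ≤ u := by
      intro u hu
      by_contra hlt
      push_neg at hlt
      have hsub : (Finset.range n).filter (fun i => v i ≤ u)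
          ⊆ (Finset.range n).filter (fun i => v i ≤ sInf S) := by
        intro i hi
        simp only [Finset.mem_filter, Finset.mem_range] at hi ⊢
        refine ⟨hi.1, ?_⟩
        by_contra hgt
        push_neg at hgt
        have hiA : i ∈ A := Finset.mem_filter.mpr ⟨Finset.mem_range.mpr hi.1, hgt⟩
        have hcv : c ≤ v i := Finset.min'_le _ _ (Finset.mem_image_of_mem v hiA)
        exact absurd hi.2 (not_le.mpr (lt_of_lt_of_le hlt hcv))
      exact hni (le_trans hu (Finset.card_le_card hsub))
    exact absurd (le_csInf hSne hlb) (not_le.mpr hcS)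
  constructor
  · intro h
    exact le_trans hInf (cnt_le_cnt fun i _ hi => hi.trans h)
  · intro h
    exact csInf_le hSbdd h

set_option maxHeartbeats 1000000 in
set_option synthInstance.maxHeartbeats 400000 in
private lemma empiricalCDF_tendsto
    {Ω : Type*} [MeasurableSpace Ω] (μ : Measure Ω) [IsProbabilityMeasure μ]
    (e : ℕ → Ω → ℝ) (hemeas : ∀ i, Measurable (e i))
    (hstat : StationaryErgodic μ e) (t : ℝ) (c : ℝ)
    (hc : c = (μ {ω | e 0 ω ≤ t}).toReal) (γ : ℝ) (hγ : 0 < γ) :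
    Tendsto (fun n : ℕ => μ {ω | γ ≤
        dist ((n : ℝ)⁻¹ * (((Finset.range n).filter fun i => e i ω ≤ t).card : ℝ)) c})
      atTop (nhds 0) := by
  classical
  set Φ : Ω → (ℕ → ℝ) := fun ω i => e i ω with hΦdef
  have hΦ : Measurable Φ := measurable_pi_lambda _ hemeas
  set ν : Measure (ℕ → ℝ) := Measure.map Φ μ with hνdef
  haveI : IsProbabilityMeasure ν := Measure.isProbabilityMeasure_map hΦ.aemeasurable
  have hErg : Ergodic pathShift ν := hstat
  have mp : MeasurePreserving pathShift ν ν := hErg.toMeasurePreserving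
  -- the indicator of {g | g 0 ≤ t} in L²(ν)
  have hsm : ∀ k : ℕ, MeasurableSet {g : ℕ → ℝ | g k ≤ t} :=
    fun k => measurableSet_le (measurable_pi_apply k) measurable_const
  set x : Lp ℝ 2 ν := indicatorConstLp 2 (hsm 0) (measure_ne_top ν _) (1 : ℝ) with hxdef
  set U : Lp ℝ 2 ν →L[ℝ] Lp ℝ 2 ν :=
    (Lp.compMeasurePreservingₗᵢ ℝ pathShift mp).toContinuousLinearMap with hUdef
  have hU : ‖U‖ ≤ 1 := LinearIsometry.norm_toContinuousLinearMap_le _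
  have conv := U.tendsto_birkhoffAverage_orthogonalProjection hU x
  obtain ⟨Y0, hY0conv⟩ : ∃ y : LinearMap.eqLocus (↑U : Lp ℝ 2 ν →ₗ[ℝ] Lp ℝ 2 ν) 1,
      Tendsto (birkhoffAverage ℝ U _root_.id · x) atTop (nhds (↑y : Lp ℝ 2 ν)) := ⟨_, conv⟩
  set Y : Lp ℝ 2 ν := ↑Y0 with hYdef
  have hfix : U Y = Y := Y0.2
  -- Y is a.e. invariant under the shift, hence a.e. constant by ergodicity
  have hUapp : ∀ w : Lp ℝ 2 ν, ⇑(U w) =ᵐ[ν] ⇑w ∘ pathShift :=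
    fun w => Lp.coeFn_compMeasurePreserving w mp
  have hYinv : ⇑Y ∘ pathShift =ᵐ[ν] ⇑Y := by
    have h1 := hUapp Y
    rw [hfix] at h1
    exact h1.symm
  obtain ⟨cc, hcc⟩ := hErg.ae_eq_const_of_ae_eq_comp₀
    (Lp.aestronglyMeasurable Y).aemeasurable.nullMeasurable hYinv
  -- the constant function 1 is a fixed point of U
  set z : Lp ℝ 2 ν := Lp.const 2 ν (1 : ℝ) with hzdef
  have hz : U z = z := by
    apply Lp.ext
    refine (hUapp z).trans ?_
    have h2 : ⇑z =ᵐ[ν] fun _ => (1 : ℝ) := Lp.coeFn_const ..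
    exact (mp.quasiMeasurePreserving.ae_eq_comp h2).trans h2.symm
  have hUiso : ∀ a b : Lp ℝ 2 ν, (inner ℝ (U a) (U b) : ℝ) = inner ℝ a b := fun a b =>
    (Lp.compMeasurePreservingₗᵢ ℝ pathShift mp).inner_map_map a b
  have hiter : ∀ k : ℕ, (inner ℝ z ((U^[k]) x) : ℝ) = inner ℝ z x := by
    intro k
    induction k with
    | zero => rfl
    | succ k ih =>
      rw [Function.iterate_succ_apply']
      calc (inner ℝ z (U (U^[k] x)) : ℝ) = inner ℝ (U z) (U (U^[k] x)) := by rw [hz]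
        _ = inner ℝ z (U^[k] x) := hUiso _ _
        _ = inner ℝ z x := ih
  have hinner_lim : Tendsto (fun n => (inner ℝ z (birkhoffAverage ℝ U _root_.id n x) : ℝ))
      atTop (nhds (inner ℝ z Y)) := tendsto_const_nhds.inner hY0conv
  have hinner_eq : ∀ n : ℕ, 1 ≤ n →
      (inner ℝ z (birkhoffAverage ℝ U _root_.id n x) : ℝ) = inner ℝ z x := by
    intro n hn
    have hsum : birkhoffSum U _root_.id n x = ∑ k ∈ Finset.range n, U^[k] x := by
      simp [birkhoffSum]
    rw [birkhoffAverage, hsum, real_inner_smul_right, inner_sum]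
    simp only [hiter]
    rw [Finset.sum_const, Finset.card_range, nsmul_eq_mul, ← mul_assoc,
      inv_mul_cancel₀ (Nat.cast_ne_zero.mpr (by omega)), one_mul]
  have hconstt : Tendsto (fun _ : ℕ => (inner ℝ z x : ℝ)) atTop (nhds (inner ℝ z x)) :=
    tendsto_const_nhds
  have hzY : (inner ℝ z Y : ℝ) = inner ℝ z x := by
    refine tendsto_nhds_unique hinner_lim (Tendsto.congr' ?_ hconstt)
    filter_upwards [eventually_ge_atTop 1] with n hn
    exact (hinner_eq n hn).symm
  have hx_coe : ⇑x =ᵐ[ν] Set.indicator {g : ℕ → ℝ | g 0 ≤ t} (fun _ => (1:ℝ)) :=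
    indicatorConstLp_coeFn
  have hz_coe : ⇑z =ᵐ[ν] fun _ => (1:ℝ) := Lp.coeFn_const ..
  have hinner_zx_val : (inner ℝ z x : ℝ) = (ν {g : ℕ → ℝ | g 0 ≤ t}).toReal := by
    rw [L2.inner_def]
    have heq : ∫ a, (inner ℝ (z a) (x a) : ℝ) ∂ν
        = ∫ a, Set.indicator {g : ℕ → ℝ | g 0 ≤ t} (fun _ => (1:ℝ)) a ∂ν := by
      refine integral_congr_ae ?_
      filter_upwards [hx_coe, hz_coe] with a ha hb
      rw [ha, hb]
      simp [RCLike.inner_apply]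
    rw [heq, integral_indicator_const _ (hsm 0)]
    simp [Measure.real]
  have hinner_zY_val : (inner ℝ z Y : ℝ) = cc := by
    rw [L2.inner_def]
    have heq : ∫ a, (inner ℝ (z a) (Y a) : ℝ) ∂ν = ∫ _, cc ∂ν := by
      refine integral_congr_ae ?_
      filter_upwards [hz_coe, hcc] with a h1 h2
      rw [h1, h2]
      simp [RCLike.inner_apply, Function.const]
    rw [heq, integral_const]
    simp
  have hνs : ν {g : ℕ → ℝ | g 0 ≤ t} = μ {ω | e 0 ω ≤ t} := by
    rw [hνdef, Measure.map_apply hΦ (hsm 0)]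
    rfl
  have hcc_eq : cc = c := by
    rw [← hinner_zY_val, hzY, hinner_zx_val, hνs, hc]
  -- identify the Birkhoff averages with empirical CDFs
  have hiterfun : ∀ k : ℕ, ⇑((U^[k]) x) =ᵐ[ν]
      fun g => Set.indicator {g' : ℕ → ℝ | g' k ≤ t} (fun _ => (1:ℝ)) g := by
    intro k
    induction k with
    | zero => exact hx_coe
    | succ k ih =>
      rw [Function.iterate_succ_apply']
      refine (hUapp _).trans ?_
      refine (mp.quasiMeasurePreserving.ae_eq_comp ih).trans ?_
      apply Filter.Eventually.of_forall
      intro g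
      simp only [Function.comp_apply]
      simp [Set.indicator_apply, pathShift, Set.mem_setOf_eq]
      exact if_congr Iff.rfl rfl rfl
  have hsumfun : ∀ n : ℕ, ⇑(birkhoffSum U _root_.id n x) =ᵐ[ν]
      fun g => ∑ k ∈ Finset.range n,
        Set.indicator {g' : ℕ → ℝ | g' k ≤ t} (fun _ => (1:ℝ)) g := by
    intro n
    induction n with
    | zero =>
      simpa [birkhoffSum, Pi.zero_def] using Lp.coeFn_zero ℝ 2 ν
    | succ n ih =>
      rw [birkhoffSum_succ]
      refine (Lp.coeFn_add _ _).trans ?_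
      filter_upwards [ih, hiterfun n] with g h1 h2
      simp only [Pi.add_apply, h1, h2, Finset.sum_range_succ, id_eq]
  have hB : ∀ n : ℕ, ⇑(birkhoffAverage ℝ U _root_.id n x) =ᵐ[ν]
      fun g => (n:ℝ)⁻¹ * ∑ k ∈ Finset.range n,
        Set.indicator {g' : ℕ → ℝ | g' k ≤ t} (fun _ => (1:ℝ)) g := by
    intro n
    rw [birkhoffAverage]
    refine (Lp.coeFn_smul _ _).trans ?_
    filter_upwards [hsumfun n] with g h1
    simp [h1]
  have htim : TendstoInMeasure ν (fun n => ⇑(birkhoffAverage ℝ U _root_.id n x)) atTop ⇑Y :=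
    tendstoInMeasure_of_tendsto_Lp hY0conv
  have htim2 : TendstoInMeasure ν
      (fun (n : ℕ) g => (n:ℝ)⁻¹ * ∑ k ∈ Finset.range n,
        Set.indicator {g' : ℕ → ℝ | g' k ≤ t} (fun _ => (1:ℝ)) g)
      atTop (fun _ => c) := by
    refine TendstoInMeasure.congr (fun n => hB n) ?_ htim
    refine hcc.trans ?_
    have hconst : (Function.const (ℕ → ℝ) cc) = fun _ => c := by
      funext _
      simp [Function.const, hcc_eq]
    rw [hconst]
  have key := (tendstoInMeasure_iff_dist.mp htim2) γ hγ
  refine key.congr fun n => ?_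
  have hGmeas : Measurable (fun g : ℕ → ℝ => (n:ℝ)⁻¹ * ∑ k ∈ Finset.range n,
      Set.indicator {g' : ℕ → ℝ | g' k ≤ t} (fun _ => (1:ℝ)) g) := by
    apply Measurable.const_mul
    apply Finset.measurable_sum
    intro k _
    exact measurable_const.indicator (hsm k)
  have hsetmeas : MeasurableSet {g : ℕ → ℝ | γ ≤
      dist ((n:ℝ)⁻¹ * ∑ k ∈ Finset.range n,
        Set.indicator {g' : ℕ → ℝ | g' k ≤ t} (fun _ => (1:ℝ)) g) c} :=
    measurableSet_le measurable_const (hGmeas.dist measurable_const)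
  rw [hνdef, Measure.map_apply hΦ hsetmeas]
  congr 1
  ext ω
  simp only [Set.mem_preimage, Set.mem_setOf_eq]
  have hcard : ∑ k ∈ Finset.range n,
      Set.indicator {g' : ℕ → ℝ | g' k ≤ t} (fun _ => (1:ℝ)) (Φ ω)
      = (((Finset.range n).filter fun i => e i ω ≤ t).card : ℝ) := by
    rw [← Finset.sum_boole]
    refine Finset.sum_congr rfl fun k _ => ?_
    simp only [Set.indicator_apply, Set.mem_setOf_eq]
    exact if_congr Iff.rfl rfl rfl
  rw [hcard]

/-- consistency of the empirical `(1−α)` quantile of perturbed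
residuals.  `(e_i)` is stationary and ergodic with distribution function `F` having a
bounded density near the `(1−α)` quantile `s` and strictly increasing at `s`; the
perturbations satisfy `max_{i ≤ n} |ê_{i,n} − e_i| →p 0`.  Then the
`⌈(1−α)n⌉`-th smallest value among `ê_{1,n}, …, ê_{n,n}` converges in probability
to `s`. -/
theorem empirical_quantile_consistency
    {Ω : Type*} [MeasurableSpace Ω] (μ : Measure Ω) [IsProbabilityMeasure μ]
    (α : ℝ) (hα : α ∈ Set.Ioo (0 : ℝ) 1)
    (e : ℕ → Ω → ℝ)
    (hemeas : ∀ i, Measurable (e i))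
    (hstat : StationaryErgodic μ e)
    (F : ℝ → ℝ) (hF : ∀ t, F t = (μ {ω | e 0 ω ≤ t}).toReal)
    (s : ℝ) (hs : s = sInf {t : ℝ | 1 - α ≤ F t})
    (hdens : ∃ pdf : ℝ → ℝ,
      Measure.map (e 0) μ = MeasureTheory.volume.withDensity
        (fun t => ENNReal.ofReal (pdf t)) ∧
      ∃ δ > (0 : ℝ), ∃ Cf : ℝ, ∀ t ∈ Set.Ioo (s - δ) (s + δ), pdf t ≤ Cf)
    (hstrict : (∀ t < s, F t < F s) ∧ (∀ t, s < t → F s < F t))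
    (Ehat : ℕ → ℕ → Ω → ℝ)
    (hEmeas : ∀ n i, Measurable (Ehat n i))
    (hclose : ∀ δ > (0 : ℝ),
      Tendsto (fun n => μ {ω | ∃ i < n, δ < |Ehat n i ω - e i ω|}) atTop (nhds 0)) :
    TendstoInMeasure μ
      (fun n ω => kthSmallest n (Nat.ceil ((1 - α) * n)) (fun i => Ehat n i ω))
      atTop (fun _ => s) := by
  obtain ⟨hα0, hα1⟩ := hα
  have hα1' : 0 < 1 - α := by linarith
  -- basic facts about F and s
  have hFmono : Monotone F := by
    intro a b hab
    rw [hF a, hF b]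
    exact ENNReal.toReal_mono (measure_ne_top μ _)
      (measure_mono fun ω (hω : e 0 ω ≤ a) => le_trans hω hab)
  set S : Set ℝ := {t : ℝ | 1 - α ≤ F t} with hSdef
  have hSup : ∀ ⦃a b : ℝ⦄, a ≤ b → a ∈ S → b ∈ S := fun a b hab ha =>
    le_trans ha (hFmono hab)
  have hSne : S.Nonempty := by
    have hmono : Monotone (fun n : ℕ => {ω : Ω | e 0 ω ≤ (n : ℝ)}) := by
      intro a b hab ω (hω : e 0 ω ≤ (a : ℝ))
      exact le_trans hω (by exact_mod_cast hab)
    have hun : (⋃ n : ℕ, {ω : Ω | e 0 ω ≤ (n : ℝ)}) = Set.univ := by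
      ext ω
      simp only [Set.mem_iUnion, Set.mem_setOf_eq, Set.mem_univ, iff_true]
      obtain ⟨n, hn⟩ := exists_nat_ge (e 0 ω)
      exact ⟨n, hn⟩
    have htend := tendsto_measure_iUnion_atTop (μ := μ) hmono
    rw [hun, measure_univ] at htend
    have hlt : ENNReal.ofReal (1 - α) < 1 := ENNReal.ofReal_lt_one.mpr (by linarith)
    obtain ⟨n, hn⟩ := (htend.eventually (lt_mem_nhds hlt)).exists
    refine ⟨(n : ℝ), ?_⟩
    show 1 - α ≤ F (n : ℝ)
    rw [hF]
    exact (ENNReal.ofReal_le_iff_le_toReal (measure_ne_top μ _)).mp hn.le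
  have hSbdd : BddBelow S := by
    have hanti : Antitone (fun n : ℕ => {ω : Ω | e 0 ω ≤ -(n : ℝ)}) := by
      intro a b hab ω (hω : e 0 ω ≤ -(b : ℝ))
      refine le_trans hω (by simp; exact_mod_cast hab)
    have hint : (⋂ n : ℕ, {ω : Ω | e 0 ω ≤ -(n : ℝ)}) = (∅ : Set Ω) := by
      ext ω
      simp only [Set.mem_iInter, Set.mem_setOf_eq, Set.mem_empty_iff_false, iff_false, not_forall]
      obtain ⟨n, hn⟩ := exists_nat_gt (-(e 0 ω))
      exact ⟨n, by simp only [not_le]; linarith⟩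
    have htend := tendsto_measure_iInter_atTop (μ := μ)
      (fun n : ℕ => (measurableSet_le (hemeas 0) measurable_const).nullMeasurableSet)
      hanti ⟨0, measure_ne_top μ _⟩
    rw [hint, measure_empty] at htend
    have hpos : (0 : ℝ≥0∞) < ENNReal.ofReal (1 - α) := ENNReal.ofReal_pos.mpr (by linarith)
    obtain ⟨n, hn⟩ := (htend.eventually (gt_mem_nhds hpos)).exists
    refine ⟨-(n : ℝ), fun u hu => ?_⟩
    by_contra hlt
    push_neg at hlt
    have h1 : F u < 1 - α := by
      calc F u ≤ F (-(n:ℝ)) := hFmono hlt.le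
        _ < 1 - α := by
          rw [hF]
          exact ENNReal.toReal_lt_of_lt_ofReal hn
    exact absurd hu (not_le.mpr h1)
  have hsinf : s = sInf S := hs
  have hFs : 1 - α ≤ F s := by
    set v : ℕ → ℝ := fun k => s + ((k : ℝ) + 1)⁻¹ with hvdef
    have hvS : ∀ k, 1 - α ≤ F (v k) := by
      intro k
      have hlt : sInf S < v k := by
        rw [← hsinf]
        have hp : (0:ℝ) < ((k:ℝ)+1)⁻¹ := by positivity
        show s < s + ((k:ℝ)+1)⁻¹
        linarith
      obtain ⟨u, huS, hu⟩ := exists_lt_of_csInf_lt hSne hlt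
      exact le_trans huS (hFmono hu.le)
    have hanti : Antitone (fun k : ℕ => {ω : Ω | e 0 ω ≤ v k}) := by
      intro a b hab ω (hω : e 0 ω ≤ v b)
      have hba : ((b:ℝ)+1)⁻¹ ≤ ((a:ℝ)+1)⁻¹ := by
        apply inv_anti₀ (by positivity)
        have : (a:ℝ) ≤ (b:ℝ) := Nat.cast_le.mpr hab
        linarith
      show e 0 ω ≤ v a
      have hvb : v b = s + ((b:ℝ)+1)⁻¹ := rfl
      have hva : v a = s + ((a:ℝ)+1)⁻¹ := rfl
      rw [hvb] at hω
      rw [hva]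
      linarith
    have hint : (⋂ k : ℕ, {ω : Ω | e 0 ω ≤ v k}) = {ω : Ω | e 0 ω ≤ s} := by
      ext ω
      simp only [Set.mem_iInter, Set.mem_setOf_eq]
      constructor
      · intro h
        by_contra hgt
        push_neg at hgt
        obtain ⟨k, hk⟩ := exists_nat_one_div_lt (show (0:ℝ) < e 0 ω - s by linarith)
        have := h k
        rw [hvdef] at this
        simp only at this
        rw [one_div] at hk
        linarith
      · intro h k
        have : (0:ℝ) < ((k:ℝ)+1)⁻¹ := by positivity
        simp only [hvdef]
        linarith
    have htend := tendsto_measure_iInter_atTop (μ := μ)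
      (fun k : ℕ => (measurableSet_le (hemeas 0) measurable_const).nullMeasurableSet)
      hanti ⟨0, measure_ne_top μ _⟩
    rw [hint] at htend
    have htendR := (ENNReal.tendsto_toReal (measure_ne_top μ _)).comp htend
    have hFt : Tendsto (fun k => F (v k)) atTop (nhds (F s)) := by
      simp only [hF]
      exact htendR
    exact ge_of_tendsto hFt (Filter.Eventually.of_forall hvS)
  -- main argument
  rw [tendstoInMeasure_iff_dist]
  intro ε hε
  set t₁ : ℝ := s - ε / 2 with ht₁def
  set t₂ : ℝ := s + ε / 4 with ht₂def
  have hFt₁ : F t₁ < 1 - α := by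
    by_contra hge
    push_neg at hge
    have : s ≤ t₁ := by rw [hsinf]; exact csInf_le hSbdd hge
    rw [ht₁def] at this
    linarith
  have hFt₂ : 1 - α < F t₂ := lt_of_le_of_lt hFs (hstrict.2 t₂ (by rw [ht₂def]; linarith))
  set γ₁ : ℝ := (1 - α) - F t₁ with hγ₁def
  set γ₂ : ℝ := F t₂ - (1 - α) with hγ₂def
  have hγ₁pos : 0 < γ₁ := by rw [hγ₁def]; linarith
  have hγ₂pos : 0 < γ₂ := by rw [hγ₂def]; linarith
  have hA := hclose (ε / 4) (by linarith)
  have hB1 := empiricalCDF_tendsto μ e hemeas hstat t₁ (F t₁) (hF t₁) γ₁ hγ₁pos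
  have hB2 := empiricalCDF_tendsto μ e hemeas hstat t₂ (F t₂) (hF t₂) γ₂ hγ₂pos
  have hupper : Tendsto (fun n : ℕ =>
      μ {ω | ∃ i < n, ε / 4 < |Ehat n i ω - e i ω|}
      + (μ {ω | γ₁ ≤ dist ((n : ℝ)⁻¹ *
            (((Finset.range n).filter fun i => e i ω ≤ t₁).card : ℝ)) (F t₁)}
        + μ {ω | γ₂ ≤ dist ((n : ℝ)⁻¹ *
            (((Finset.range n).filter fun i => e i ω ≤ t₂).card : ℝ)) (F t₂)}))
      atTop (nhds 0) := by
    have h0 : (0 : ℝ≥0∞) = 0 + (0 + 0) := by simp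
    rw [h0]
    exact hA.add (hB1.add hB2)
  refine tendsto_of_tendsto_of_tendsto_of_le_of_le' tendsto_const_nhds hupper
    (Filter.Eventually.of_forall fun n => zero_le) ?_
  filter_upwards [eventually_ge_atTop 1] with n hn
  set k : ℕ := Nat.ceil ((1 - α) * n) with hkdef
  have hnpos : (0:ℝ) < n := by exact_mod_cast hn
  have hk1 : 0 < k := by
    rw [hkdef]
    exact Nat.ceil_pos.mpr (by positivity)
  have hkn : k ≤ n := by
    rw [hkdef]
    exact Nat.ceil_le.mpr (by nlinarith)
  have hkge : (1 - α) * n ≤ (k : ℝ) := Nat.le_ceil _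
  have hklt : (k : ℝ) < (1 - α) * n + 1 := Nat.ceil_lt_add_one (by positivity)
  refine le_trans (measure_mono ?_) ((measure_union_le _ _).trans
    (add_le_add le_rfl (measure_union_le _ _)))
  intro ω hω
  simp only [Set.mem_setOf_eq] at hω
  by_contra hnot
  simp only [Set.mem_union, Set.mem_setOf_eq] at hnot
  push_neg at hnot
  obtain ⟨hAc', hB1c, hB2c⟩ := hnot
  -- lower bound : s - ε < Q̂
  have hlow : ¬ (kthSmallest n k (fun i => Ehat n i ω) ≤ s - ε) := by
    intro hle
    rw [kthSmallest_le_iff hn hk1 hkn] at hle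
    have hcnt : k ≤ ((Finset.range n).filter fun i => e i ω ≤ t₁).card := by
      refine le_trans hle (cnt_le_cnt fun i hi hvi => ?_)
      have := hAc' i hi
      rw [abs_le] at this
      rw [ht₁def]
      linarith [this.2]
    have hFh : (1 - α) ≤ (n : ℝ)⁻¹ * (((Finset.range n).filter fun i => e i ω ≤ t₁).card : ℝ) := by
      have h1 : (1 - α) * n ≤ (((Finset.range n).filter fun i => e i ω ≤ t₁).card : ℝ) :=
        le_trans hkge (by exact_mod_cast hcnt)
      rw [inv_mul_eq_div, le_div_iff₀ hnpos]
      exact h1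
    have habs : γ₁ ≤ dist ((n : ℝ)⁻¹ *
        (((Finset.range n).filter fun i => e i ω ≤ t₁).card : ℝ)) (F t₁) := by
      rw [Real.dist_eq]
      have h2 : γ₁ ≤ (n : ℝ)⁻¹ *
          (((Finset.range n).filter fun i => e i ω ≤ t₁).card : ℝ) - F t₁ := by
        rw [hγ₁def]; linarith
      exact le_trans h2 (le_abs_self _)
    exact absurd habs (not_le.mpr hB1c)
  -- upper bound : Q̂ ≤ s + ε/2
  have hhigh : kthSmallest n k (fun i => Ehat n i ω) ≤ s + ε / 2 := by
    rw [kthSmallest_le_iff hn hk1 hkn]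
    have hcnt2 : k ≤ ((Finset.range n).filter fun i => e i ω ≤ t₂).card := by
      by_contra hlt
      push_neg at hlt
      have h1 : (((Finset.range n).filter fun i => e i ω ≤ t₂).card : ℝ) + 1 ≤ (k : ℝ) := by
        exact_mod_cast hlt
      have h2 : (((Finset.range n).filter fun i => e i ω ≤ t₂).card : ℝ) < (1 - α) * n := by
        linarith
      have hFh2 : (n : ℝ)⁻¹ * (((Finset.range n).filter fun i => e i ω ≤ t₂).card : ℝ) < 1 - α := by
        rw [inv_mul_eq_div, div_lt_iff₀ hnpos]
        linarith [h2]
      have habs : γ₂ ≤ dist ((n : ℝ)⁻¹ *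
          (((Finset.range n).filter fun i => e i ω ≤ t₂).card : ℝ)) (F t₂) := by
        rw [Real.dist_eq]
        have h3 : γ₂ ≤ -((n : ℝ)⁻¹ *
            (((Finset.range n).filter fun i => e i ω ≤ t₂).card : ℝ) - F t₂) := by
          rw [hγ₂def]; linarith
        exact le_trans h3 (neg_le_abs _)
      exact absurd habs (not_le.mpr hB2c)
    refine le_trans hcnt2 (cnt_le_cnt fun i hi hvi => ?_)
    have := hAc' i hi
    rw [abs_le] at this
    rw [ht₂def] at hvi
    linarith [this.1]
  have : dist (kthSmallest n k (fun i => Ehat n i ω)) s < ε := by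
    rw [Real.dist_eq, abs_lt]
    constructor
    · push_neg at hlow
      linarith
    · linarith
  exact absurd hω (not_le.mpr this)
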